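/- (Barbalat's lemma) If f : [0,∞) → ℝ is uniformly continuous and lim_{t→∞} ∫₀^t f(s) ds exists and is finite, then lim_{t→∞} f(t) = 0. -/
import Mathlib

open Filter intervalIntegral

/-- Barbalat's lemma. -/
theorem stmt14 (f : ℝ → ℝ)
    (hf : ContinuousOn f (Set.Ici 0))
    (huc : UniformContinuousOn f (Set.Ici 0))
    (hint : ∃ L : ℝ, Tendsto (fun t => ∫ s in (0 : ℝ)..t, f s) atTop (nhds L)) :
    Tendsto f atTop (nhds 0) := by
  obtain ⟨L, hL⟩ := hint
  rw [Metric.tendsto_atTop] at hL ⊢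
  intro ε hε
  rw [Metric.uniformContinuousOn_iff] at huc
  obtain ⟨δ, hδ, hδ'⟩ := huc (ε/2) (by linarith)
  obtain ⟨T, hT⟩ := hL (ε*δ/16) (by positivity)
  refine ⟨max T 0, fun t ht => ?_⟩
  have ht0 : 0 ≤ t := le_trans (le_max_right T 0) ht
  have htT : T ≤ t := le_trans (le_max_left T 0) ht
  rw [Real.dist_eq, sub_zero]
  by_contra h
  push_neg at h
  have hint1 : IntervalIntegrable f MeasureTheory.volume 0 t := by
    apply (hf.mono ?_).intervalIntegrable
    rw [Set.uIcc_of_le ht0]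
    exact fun x hx => hx.1
  have hint3 : IntervalIntegrable f MeasureTheory.volume t (t + δ/2) := by
    apply (hf.mono ?_).intervalIntegrable
    rw [Set.uIcc_of_le (by linarith)]
    exact fun x hx => le_trans ht0 hx.1
  have hIeq : (∫ s in t..(t + δ/2), f s)
      = (∫ s in (0:ℝ)..(t + δ/2), f s) - (∫ s in (0:ℝ)..t, f s) := by
    rw [eq_sub_iff_add_eq, add_comm]
    exact intervalIntegral.integral_add_adjacent_intervals hint1 hint3
  have h1 := hT t htT
  have h2 := hT (t + δ/2) (by linarith)
  rw [Real.dist_eq] at h1 h2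
  have hIbound : |∫ s in t..(t + δ/2), f s| < ε*δ/4 := by
    rw [hIeq]
    have := abs_sub_le (∫ s in (0:ℝ)..(t+δ/2), f s) L (∫ s in (0:ℝ)..t, f s)
    rw [abs_sub_comm L _] at this
    have hεδ : 0 < ε * δ := mul_pos hε hδ
    linarith
  have key : ∀ s ∈ Set.Icc t (t + δ/2), |f s - f t| < ε/2 := by
    intro s hs
    have hd : dist s t < δ := by
      rw [Real.dist_eq, abs_lt]
      constructor
      · linarith [hs.1]
      · linarith [hs.2]
    have := hδ' s (le_trans ht0 hs.1) t ht0 hd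
    rwa [Real.dist_eq] at this
  have hIle := le_abs_self (∫ s in t..(t + δ/2), f s)
  have hIge := neg_abs_le (∫ s in t..(t + δ/2), f s)
  rcases le_abs.mp h with hpos | hneg
  · have hmono := intervalIntegral.integral_mono_on (by linarith : t ≤ t + δ/2)
      (_root_.intervalIntegrable_const (c := ε/2)) hint3
      (fun x hx => by have := key x hx; rw [abs_lt] at this; linarith)
    rw [intervalIntegral.integral_const, smul_eq_mul] at hmono
    have : (t + δ/2 - t) * (ε/2) = ε*δ/4 := by ring
    linarith
  · have hmono := intervalIntegral.integral_mono_on (by linarith : t ≤ t + δ/2)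
      hint3 (_root_.intervalIntegrable_const (c := -(ε/2)))
      (fun x hx => by have := key x hx; rw [abs_lt] at this; linarith)
    rw [intervalIntegral.integral_const, smul_eq_mul] at hmono
    have : (t + δ/2 - t) * (-(ε/2)) = -(ε*δ/4) := by ring
    linarith
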